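/- Let V be a real vector space of dimension n + k (n ≥ 1, k ≥ 0) and let z₁,…,zₙ ∈ V be linearly independent, z := z₁ ∧ ⋯ ∧ zₙ. Then the subspace T_zD ⊆ ⋀ⁿV has dimension nk + 1. Moreover, if ω ∈ (⋀ⁿV)* satisfies ω(z) = 1, then T_zD^ω has dimension nk. -/

import Mathlib

open ExteriorAlgebra

/-- The wedge `v₁ ∧ ⋯ ∧ vₙ` of `n` vectors, as an element of the `n`-th exterior power. -/
noncomputable def wedge {V : Type*} [AddCommGroup V] [Module ℝ V] (n : ℕ) (v : Fin n → V) :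
    ⋀[ℝ]^n V :=
  ⟨ExteriorAlgebra.ιMulti ℝ n v, ExteriorAlgebra.ιMulti_range ℝ n ⟨v, rfl⟩⟩

/-- The tangent space at `z = z₁ ∧ ⋯ ∧ zₙ` to the cone of decomposable `n`-vectors:
the span of all slot replacements `z₁ ∧ ⋯ ∧ v ∧ ⋯ ∧ zₙ`. -/
noncomputable def tangentD {V : Type*} [AddCommGroup V] [Module ℝ V] (n : ℕ)
    (z : Fin n → V) : Submodule ℝ (⋀[ℝ]^n V) :=
  Submodule.span ℝ {w | ∃ (i : Fin n) (v : V), w = wedge n (Function.update z i v)}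

section Aux

variable {V : Type*} [AddCommGroup V] [Module ℝ V] {ι : Type*} [Fintype ι] [DecidableEq ι]

/-- Determinant-of-coordinates alternating form associated to a choice of `n` basis indices. -/
noncomputable def auxPhi (b : Module.Basis ι ℝ V) (n : ℕ) (s : Fin n → ι) : V [⋀^Fin n]→ₗ[ℝ] ℝ :=
  (Matrix.detRowAlternating (R := ℝ) (n := Fin n)).compLinearMap
    (LinearMap.pi fun i => b.coord (s i))

theorem auxPhi_apply (b : Module.Basis ι ℝ V) (n : ℕ) (s : Fin n → ι) (v : Fin n → V) :
    auxPhi b n s v = Matrix.det (Matrix.of fun j i => b.coord (s i) (v j)) := rfl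

theorem auxPhi_basis_zero (b : Module.Basis ι ℝ V) (n : ℕ) (s t : Fin n → ι)
    (h : ∃ i, s i ∉ Set.range t) : auxPhi b n s (b ∘ t) = 0 := by
  obtain ⟨i, hi⟩ := h
  rw [auxPhi_apply]
  apply Matrix.det_eq_zero_of_column_eq_zero i
  intro j
  simp only [Matrix.of_apply, Function.comp_apply, Module.Basis.coord_apply, Module.Basis.repr_self_apply]
  rw [if_neg]
  exact fun h => hi ⟨j, h⟩

theorem auxPhi_basis_one (b : Module.Basis ι ℝ V) (n : ℕ) (s : Fin n → ι)
    (hs : Function.Injective s) : auxPhi b n s (b ∘ s) = 1 := by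
  rw [auxPhi_apply]
  have : (Matrix.of fun j i => (b.coord (s i)) ((b ∘ s) j)) = (1 : Matrix (Fin n) (Fin n) ℝ) := by
    ext j i
    simp only [Matrix.of_apply, Function.comp_apply, Module.Basis.coord_apply, Module.Basis.repr_self_apply,
      Matrix.one_apply]
    by_cases h : j = i <;> simp [h, hs.eq_iff]
  rw [this, Matrix.det_one]

/-- The extension of `auxPhi` to a linear functional on the `n`-th exterior power. -/
noncomputable def auxPhiE (b : Module.Basis ι ℝ V) (n : ℕ) (s : Fin n → ι) :
    Module.Dual ℝ (⋀[ℝ]^n V) :=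
  (ExteriorAlgebra.liftAlternating
      (Function.update (fun i => (0 : V [⋀^Fin i]→ₗ[ℝ] ℝ)) n (auxPhi b n s))).comp
    (⋀[ℝ]^n V).subtype

omit [Fintype ι] [DecidableEq ι] in
theorem auxPhiE_wedge (b : Module.Basis ι ℝ V) (n : ℕ) (s : Fin n → ι) (v : Fin n → V) :
    auxPhiE b n s (wedge n v) = auxPhi b n s v := by
  simp only [auxPhiE, LinearMap.comp_apply, Submodule.subtype_apply, wedge,
    ExteriorAlgebra.liftAlternating_apply_ιMulti, Function.update_self]

theorem aux_expand (b : Module.Basis ι ℝ V) (n : ℕ) (z : Fin n → V) (i : Fin n) (v : V) :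
    (ExteriorAlgebra.ιMulti ℝ n) (Function.update z i v) =
      ∑ j : ι, b.repr v j • (ExteriorAlgebra.ιMulti ℝ n) (Function.update z i (b j)) := by
  conv_lhs => rw [← Module.Basis.sum_repr b v]
  rw [AlternatingMap.map_update_sum]
  exact Finset.sum_congr rfl fun j _ => by rw [AlternatingMap.map_update_smul]

end Aux


theorem aux_inf_ker {M : Type*} [AddCommGroup M] [Module ℝ M] (T : Submodule ℝ M)
    [FiniteDimensional ℝ T] (ω : Module.Dual ℝ M) (x : M) (hx : x ∈ T) (hω : ω x = 1) :
    Module.finrank ℝ (T ⊓ LinearMap.ker ω : Submodule ℝ M) + 1 = Module.finrank ℝ T := by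
  classical
  set ω' := ω.comp T.subtype with hω'
  have hker : LinearMap.ker ω' = Submodule.comap T.subtype (T ⊓ LinearMap.ker ω) := by
    rw [hω', LinearMap.ker_comp, Submodule.comap_inf, Submodule.comap_subtype_self, top_inf_eq]
  have hrange : LinearMap.range ω' = ⊤ := by
    rw [LinearMap.range_eq_top]
    intro c
    refine ⟨c • ⟨x, hx⟩, ?_⟩
    rw [map_smul]
    simp [hω', hω]
  have hrn := LinearMap.finrank_range_add_finrank_ker ω'
  rw [hrange, finrank_top, Module.finrank_self] at hrn
  have heq : Module.finrank ℝ (T ⊓ LinearMap.ker ω : Submodule ℝ M) =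
      Module.finrank ℝ (LinearMap.ker ω') := by
    rw [hker]
    exact (Submodule.comapSubtypeEquivOfLe inf_le_left).finrank_eq.symm
  rw [heq]
  omega

set_option maxHeartbeats 1000000 in
set_option synthInstance.maxHeartbeats 400000 in
/-- `dim T_zD = nk + 1`, and if `ω(z) = 1` then `dim T_zD^ω = nk`. -/
theorem statement6 {V : Type*} [AddCommGroup V] [Module ℝ V] [FiniteDimensional ℝ V]
    (n k : ℕ) (hn : 1 ≤ n) (hdim : Module.finrank ℝ V = n + k)
    (z : Fin n → V) (hz : LinearIndependent ℝ z) :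
    Module.finrank ℝ (tangentD n z) = n * k + 1 ∧
      ∀ ω : Module.Dual ℝ (⋀[ℝ]^n V), ω (wedge n z) = 1 →
        Module.finrank ℝ (tangentD n z ⊓ LinearMap.ker ω : Submodule ℝ (⋀[ℝ]^n V)) = n * k := by
  classical
  -- extend `z` to a basis of `V`
  obtain ⟨b, hb⟩ : ∃ b : Module.Basis (Fin n ⊕ Fin k) ℝ V, ∀ i, b (Sum.inl i) = z i := by
    obtain ⟨W', hc⟩ := Submodule.exists_isCompl (Submodule.span ℝ (Set.range z))
    have h1 : Module.finrank ℝ (Submodule.span ℝ (Set.range z)) = n := by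
      rw [finrank_span_eq_card hz, Fintype.card_fin]
    have h2 : Module.finrank ℝ W' = k := by
      have := Submodule.finrank_add_eq_of_isCompl hc
      omega
    let bW : Module.Basis (Fin n) ℝ (Submodule.span ℝ (Set.range z)) := Module.Basis.span hz
    let bW' : Module.Basis (Fin k) ℝ W' := Module.finBasisOfFinrankEq ℝ W' h2
    refine ⟨(bW.prod bW').map (Submodule.prodEquivOfIsCompl _ _ hc), fun i => ?_⟩
    simp [Module.Basis.prod_apply, bW, Module.Basis.span_apply, Submodule.coe_prodEquivOfIsCompl]
  -- the distinguished index families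
  set t : Option (Fin n × Fin k) → Fin n → Fin n ⊕ Fin k :=
    fun a => Option.elim a Sum.inl fun p => Function.update Sum.inl p.1 (Sum.inr p.2) with ht
  have ht_none : ∀ j, t none j = Sum.inl j := fun _ => rfl
  have ht_some : ∀ (i : Fin n) (m : Fin k) (j : Fin n),
      t (some (i, m)) j = if j = i then Sum.inr m else Sum.inl j := by
    intro i m j
    rcases eq_or_ne j i with rfl | h
    · simp [ht, Function.update_self]
    · rw [if_neg h]; simp [ht, Function.update_of_ne h]
  have ht_inj : ∀ a, Function.Injective (t a) := by
    rintro (_ | ⟨i, m⟩)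
    · exact fun x y h => Sum.inl_injective h
    · intro x y hxy
      rw [ht_some, ht_some] at hxy
      by_cases hx : x = i <;> by_cases hy : y = i
      · rw [hx, hy]
      · rw [if_pos hx, if_neg hy] at hxy; exact absurd hxy (by simp)
      · rw [if_neg hx, if_pos hy] at hxy; exact absurd hxy (by simp)
      · rw [if_neg hx, if_neg hy] at hxy; exact Sum.inl_injective hxy
  -- the wedge family
  set w : Option (Fin n × Fin k) → (⋀[ℝ]^n V) := fun a => wedge n (b ∘ t a) with hw
  have hbz : (b ∘ t none) = z := funext fun j => hb j
  have hcomp : ∀ (i : Fin n) (m : Fin k),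
      (b ∘ t (some (i, m))) = Function.update z i (b (Sum.inr m)) := by
    intro i m
    funext j
    by_cases h : j = i
    · subst h; simp [ht_some, Function.update_self]
    · simp [ht_some, h, Function.update_of_ne h, hb]
  -- separation: distinct families have separated index sets
  have hsep : ∀ a a', a ≠ a' → ∃ i, t a' i ∉ Set.range (t a) := by
    rintro (_ | ⟨i, m⟩) (_ | ⟨i', m'⟩) hne
    · exact absurd rfl hne
    · refine ⟨i', fun ⟨j, hj⟩ => ?_⟩
      rw [ht_none, ht_some] at hj
      simp at hj
    · refine ⟨i, fun ⟨j, hj⟩ => ?_⟩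
      rw [ht_some, ht_none] at hj
      by_cases h : j = i <;> simp [h] at hj
    · by_cases hm : m = m'
      · subst hm
        have hii' : i ≠ i' := fun h => hne (by rw [h])
        refine ⟨i, fun ⟨j, hj⟩ => ?_⟩
        rw [ht_some, ht_some, if_neg hii'] at hj
        by_cases h : j = i <;> simp [h] at hj
      · refine ⟨i', fun ⟨j, hj⟩ => ?_⟩
        rw [ht_some, ht_some, if_pos rfl] at hj
        by_cases h : j = i <;> simp [h] at hj
        exact hm hj
  -- evaluations of the dual functionals
  have hPhi : ∀ a a', auxPhiE b n (t a') (w a) = if a = a' then 1 else 0 := by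
    intro a a'
    by_cases h : a = a'
    · subst h
      rw [if_pos rfl, hw, auxPhiE_wedge, auxPhi_basis_one _ _ _ (ht_inj a)]
    · rw [if_neg h, hw, auxPhiE_wedge, auxPhi_basis_zero _ _ _ _ (hsep a a' h)]
  -- linear independence
  have hindep : LinearIndependent ℝ w := by
    rw [Fintype.linearIndependent_iff]
    intro g hg a
    have := congrArg (auxPhiE b n (t a)) hg
    rw [map_sum, map_zero] at this
    simpa [hPhi, Finset.sum_ite_eq'] using this
  -- span identification
  have hspan : tangentD n z = Submodule.span ℝ (Set.range w) := by
    apply le_antisymm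
    · rw [tangentD, Submodule.span_le]
      rintro x ⟨i, v, rfl⟩
      have key : wedge n (Function.update z i v) =
          (b.repr v (Sum.inl i)) • w none +
            ∑ m : Fin k, (b.repr v (Sum.inr m)) • w (some (i, m)) := by
        apply Subtype.ext
        simp only [hw, wedge, Submodule.coe_add, SetLike.val_smul,
          AddSubmonoidClass.coe_finset_sum]
        rw [aux_expand b n z i v, Fintype.sum_sum_type]
        congr 1
        · rw [Finset.sum_eq_single i]
          · rw [hb i, Function.update_eq_self, ← hbz]
          · intro i' _ hne
            rw [hb i']
            have h0 : (ExteriorAlgebra.ιMulti ℝ n) (Function.update z i (z i')) = 0 :=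
              AlternatingMap.map_eq_zero_of_eq _ _
                (by rw [Function.update_self, Function.update_of_ne hne]) hne
            rw [h0, smul_zero]
          · intro h; exact absurd (Finset.mem_univ i) h
        · exact Finset.sum_congr rfl fun m _ => by rw [hcomp]
      rw [key]
      refine Submodule.add_mem _
        (Submodule.smul_mem _ _ (Submodule.subset_span ⟨none, rfl⟩))
        (Submodule.sum_mem _ fun m _ =>
          Submodule.smul_mem _ _ (Submodule.subset_span ⟨some (i, m), rfl⟩))
    · rw [Submodule.span_le]
      rintro x ⟨a, rfl⟩
      rcases a with _ | ⟨i, m⟩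
      · refine Submodule.subset_span ⟨⟨0, hn⟩, z ⟨0, hn⟩, ?_⟩
        rw [Function.update_eq_self, hw]
        simp [hbz]
      · exact Submodule.subset_span ⟨i, b (Sum.inr m), by rw [hw]; simp [hcomp]⟩
  haveI : FiniteDimensional ℝ (tangentD n z) := by
    rw [hspan]
    exact FiniteDimensional.span_of_finite ℝ (Set.finite_range w)
  have hrank : Module.finrank ℝ (tangentD n z) = n * k + 1 := by
    rw [hspan, finrank_span_eq_card hindep]
    simp [Fintype.card_option, Nat.add_comm]
  refine ⟨hrank, fun ω hω => ?_⟩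
  -- second part via rank-nullity
  have hzT : wedge n z ∈ tangentD n z :=
    Submodule.subset_span ⟨⟨0, hn⟩, z ⟨0, hn⟩, by rw [Function.update_eq_self]⟩
  have := aux_inf_ker (tangentD n z) ω (wedge n z) hzT hω
  omega
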